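/- arXiv:1512.06061 — 5 statements merged into one kernel-verified Lean document; each statement's English description precedes it below -/
import Mathlib

section
/- Let δ₂ be the orbit distance on the partition space P_{ℓ,m} induced by the Frobenius (l₂) norm, i.e., δ₂(X,Y) = min_{P ∈ Π} ‖X − PY‖₂ where Π is the group of ℓ×ℓ permutation matrices. Then for any two partitions X and Y there exists a midpoint partition M with δ₂(X, M) = δ₂(Y, M) = δ₂(X, Y)/2. -/
open Finset

/-- Frobenius (l₂) norm of an `ℓ×m` real matrix. -/
noncomputable def frobNorm {ℓ m : ℕ} (A : Matrix (Fin ℓ) (Fin m) ℝ) : ℝ :=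
  Real.sqrt (∑ i, ∑ j, (A i j) ^ 2)

/-- Row-permutation action (multiplication by a permutation matrix). -/
def permAct {ℓ m : ℕ} (σ : Equiv.Perm (Fin ℓ)) (X : Matrix (Fin ℓ) (Fin m) ℝ) :
    Matrix (Fin ℓ) (Fin m) ℝ := fun i j => X (σ i) j

/-- The orbit distance `δ₂(X,Y) = min_{P ∈ Π} ‖X − PY‖₂` induced by the Frobenius norm. -/
noncomputable def delta2 {ℓ m : ℕ} (X Y : Matrix (Fin ℓ) (Fin m) ℝ) : ℝ :=
  Finset.univ.inf' Finset.univ_nonempty (fun σ : Equiv.Perm (Fin ℓ) => frobNorm (X - permAct σ Y))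

noncomputable def toE {ℓ m : ℕ} (A : Matrix (Fin ℓ) (Fin m) ℝ) :
    EuclideanSpace ℝ (Fin ℓ × Fin m) := WithLp.toLp 2 (fun p : Fin ℓ × Fin m => A p.1 p.2)

lemma frobNorm_eq {ℓ m : ℕ} (A : Matrix (Fin ℓ) (Fin m) ℝ) : frobNorm A = ‖toE A‖ := by
  rw [EuclideanSpace.norm_eq]
  simp [frobNorm, toE, Fintype.sum_prod_type, Real.norm_eq_abs, sq_abs]

lemma toE_sub {ℓ m : ℕ} (A B : Matrix (Fin ℓ) (Fin m) ℝ) : toE (A - B) = toE A - toE B := by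
  ext p; simp [toE]

lemma frobNorm_perm {ℓ m : ℕ} (σ : Equiv.Perm (Fin ℓ)) (A : Matrix (Fin ℓ) (Fin m) ℝ) :
    frobNorm (permAct σ A) = frobNorm A := by
  unfold frobNorm permAct
  congr 1
  exact Equiv.sum_comp σ (fun i => ∑ j, A i j ^ 2)

lemma permAct_sub {ℓ m : ℕ} (σ : Equiv.Perm (Fin ℓ)) (A B : Matrix (Fin ℓ) (Fin m) ℝ) :
    permAct σ (A - B) = permAct σ A - permAct σ B := rfl

lemma permAct_permAct {ℓ m : ℕ} (σ τ : Equiv.Perm (Fin ℓ)) (A : Matrix (Fin ℓ) (Fin m) ℝ) :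
    permAct σ (permAct τ A) = permAct (σ.trans τ) A := rfl

lemma frobNorm_neg {ℓ m : ℕ} (A B : Matrix (Fin ℓ) (Fin m) ℝ) :
    frobNorm (A - B) = frobNorm (B - A) := by
  rw [frobNorm_eq, frobNorm_eq, toE_sub, toE_sub, norm_sub_rev]

lemma delta2_le {ℓ m : ℕ} (X Y : Matrix (Fin ℓ) (Fin m) ℝ) (σ : Equiv.Perm (Fin ℓ)) :
    delta2 X Y ≤ frobNorm (X - permAct σ Y) :=
  Finset.inf'_le _ (Finset.mem_univ σ)

lemma frobNorm_sub_perm_symm {ℓ m : ℕ} (X Y : Matrix (Fin ℓ) (Fin m) ℝ)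
    (σ : Equiv.Perm (Fin ℓ)) :
    frobNorm (X - permAct σ Y) = frobNorm (Y - permAct σ⁻¹ X) := by
  rw [frobNorm_neg, ← frobNorm_perm σ⁻¹ (permAct σ Y - X), permAct_sub, permAct_permAct]
  congr 1
  funext i j
  simp [permAct]

lemma delta2_symm {ℓ m : ℕ} (X Y : Matrix (Fin ℓ) (Fin m) ℝ) : delta2 X Y = delta2 Y X := by
  have h : ∀ (X Y : Matrix (Fin ℓ) (Fin m) ℝ), delta2 X Y ≤ delta2 Y X := by
    intro X Y
    apply Finset.le_inf'
    intro σ _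
    calc delta2 X Y ≤ frobNorm (X - permAct σ⁻¹ Y) := delta2_le X Y σ⁻¹
      _ = frobNorm (Y - permAct σ X) := by rw [frobNorm_sub_perm_symm, inv_inv]
  exact le_antisymm (h X Y) (h Y X)

lemma delta2_exists {ℓ m : ℕ} (X Y : Matrix (Fin ℓ) (Fin m) ℝ) :
    ∃ σ : Equiv.Perm (Fin ℓ), delta2 X Y = frobNorm (X - permAct σ Y) := by
  obtain ⟨σ, -, hσ⟩ := Finset.exists_mem_eq_inf' Finset.univ_nonempty
    (fun σ : Equiv.Perm (Fin ℓ) => frobNorm (X - permAct σ Y))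
  exact ⟨σ, hσ⟩

lemma delta2_triangle {ℓ m : ℕ} (X Y Z : Matrix (Fin ℓ) (Fin m) ℝ) :
    delta2 X Z ≤ delta2 X Y + delta2 Y Z := by
  obtain ⟨σ, hσ⟩ := delta2_exists X Y
  obtain ⟨τ, hτ⟩ := delta2_exists Y Z
  calc delta2 X Z ≤ frobNorm (X - permAct (σ.trans τ) Z) := delta2_le X Z _
    _ ≤ frobNorm (X - permAct σ Y) + frobNorm (permAct σ Y - permAct (σ.trans τ) Z) := by
        rw [frobNorm_eq, frobNorm_eq, frobNorm_eq, toE_sub, toE_sub, toE_sub]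
        exact norm_sub_le_norm_sub_add_norm_sub _ _ _
    _ = delta2 X Y + delta2 Y Z := by
        rw [← hσ, ← permAct_permAct, ← permAct_sub, frobNorm_perm, ← hτ]

/-- in the partition space `(P_{ℓ,m}, δ₂)`, any two partitions `X` and `Y`
have a midpoint partition `M` with `δ₂(X,M) = δ₂(Y,M) = δ₂(X,Y)/2`. -/
theorem partition_space_has_midpoints {ℓ m : ℕ}
    (S : Set (Matrix (Fin ℓ) (Fin m) ℝ))
    (hS : S = {X | (∀ i j, X i j ∈ Set.Icc (0 : ℝ) 1) ∧ ∀ j, ∑ i, X i j = 1})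
    (X Y : Matrix (Fin ℓ) (Fin m) ℝ) (hX : X ∈ S) (hY : Y ∈ S) :
    ∃ M ∈ S, delta2 X M = delta2 X Y / 2 ∧ delta2 Y M = delta2 X Y / 2 := by
  subst hS
  obtain ⟨hX1, hX2⟩ := hX
  obtain ⟨hY1, hY2⟩ := hY
  obtain ⟨σ, hσ⟩ := delta2_exists X Y
  set d := delta2 X Y with hd
  set M : Matrix (Fin ℓ) (Fin m) ℝ := fun i j => (X i j + Y (σ i) j) / 2 with hM
  have hMmem : M ∈ {X : Matrix (Fin ℓ) (Fin m) ℝ |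
      (∀ i j, X i j ∈ Set.Icc (0 : ℝ) 1) ∧ ∀ j, ∑ i, X i j = 1} := by
    constructor
    · intro i j
      have h1 := hX1 i j
      have h2 := hY1 (σ i) j
      simp only [Set.mem_Icc] at h1 h2 ⊢
      simp only [hM]
      constructor <;> [linarith [h1.1, h2.1]; linarith [h1.2, h2.2]]
    · intro j
      have : (∑ i, Y (σ i) j) = ∑ i, Y i j := Equiv.sum_comp σ (fun i => Y i j)
      simp only [hM]
      rw [← Finset.sum_div, Finset.sum_add_distrib, this, hX2 j, hY2 j]
      norm_num
  -- key norm computations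
  have hXM : frobNorm (X - M) = d / 2 := by
    have : X - M = (fun i j => (X i j - permAct σ Y i j) / 2) := by
      funext i j
      rw [Matrix.sub_apply]
      simp [hM, permAct, Matrix.sub_apply, Pi.sub_apply]
      ring
    rw [this]
    have : (fun i j => (X i j - permAct σ Y i j) / 2) = (1/2 : ℝ) • (X - permAct σ Y) := by
      funext i j
      simp [Matrix.smul_apply, Matrix.sub_apply]
      ring
    rw [this, hσ, frobNorm_eq, frobNorm_eq]
    have he : toE ((1/2 : ℝ) • (X - permAct σ Y)) = (1/2 : ℝ) • toE (X - permAct σ Y) := by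
      ext p; simp [toE]
    rw [he, norm_smul]
    simp
    ring
  have hYM : frobNorm (permAct σ Y - M) = d / 2 := by
    have : permAct σ Y - M = (fun i j => (permAct σ Y i j - X i j) / 2) := by
      funext i j
      rw [Matrix.sub_apply]
      simp [hM, permAct, Matrix.sub_apply, Pi.sub_apply]
      ring
    rw [this]
    have : (fun i j => (permAct σ Y i j - X i j) / 2) = (1/2 : ℝ) • (permAct σ Y - X) := by
      funext i j
      simp [Matrix.smul_apply, Matrix.sub_apply]
      ring
    rw [this, frobNorm_eq]
    have he : toE ((1/2 : ℝ) • (permAct σ Y - X)) = (1/2 : ℝ) • toE (permAct σ Y - X) := by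
      ext p; simp [toE]
    rw [he, norm_smul, ← frobNorm_eq, frobNorm_neg, hσ]
    simp
    ring
  have hb1 : delta2 X M ≤ d / 2 := by
    have := delta2_le X M 1
    have h1 : permAct (1 : Equiv.Perm (Fin ℓ)) M = M := rfl
    rw [h1, hXM] at this
    exact this
  have hb2 : delta2 Y M ≤ d / 2 := by
    have := delta2_le Y M σ⁻¹
    rw [frobNorm_sub_perm_symm, inv_inv] at this
    have : delta2 Y M ≤ frobNorm (permAct σ Y - M) := by
      rwa [frobNorm_neg] at this
    rw [hYM] at this
    exact this
  have htri : d ≤ delta2 X M + delta2 Y M := by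
    have := delta2_triangle X M Y
    rw [delta2_symm M Y] at this
    exact this
  refine ⟨M, hMmem, ?_, ?_⟩ <;> linarith
end

section
/- If X and Y are hard partitions, then the generalized confusion matrix C(X,Y) computed from compatibility matrices via χ coincides with the classical pair-counting confusion matrix: m₁₁ counts unordered pairs {z_r, z_s} in the same cluster in both X and Y, m₁₀ counts pairs together in X but separated in Y, m₀₁ pairs separated in X but together in Y, and m₀₀ pairs separated in both. -/
open Matrix Finset

/-- Inner product of the strictly upper triangular parts. -/
def chi {m : ℕ} (A B : Matrix (Fin m) (Fin m) ℝ) : ℝ :=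
  ∑ r, ∑ s ∈ Finset.Ioi r, A r s * B r s

/-- The `m×m` all-ones matrix. -/
def onesMat (m : ℕ) : Matrix (Fin m) (Fin m) ℝ := fun _ _ => 1

/-- `r ∼_X s`: points `r` and `s` are in the same cluster of the hard partition `X`
(equal columns). -/
def sameCluster {ℓ m : ℕ} (X : Matrix (Fin ℓ) (Fin m) ℝ) (r s : Fin m) : Prop :=
  (fun i => X i r) = (fun i => X i s)

noncomputable instance {ℓ m : ℕ} (X : Matrix (Fin ℓ) (Fin m) ℝ) (r s : Fin m) :
    Decidable (sameCluster X r s) := by unfold sameCluster; infer_instance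

lemma compat_entry {ℓ m : ℕ} (X : Matrix (Fin ℓ) (Fin m) ℝ)
    (hXbin : ∀ i j, X i j = 0 ∨ X i j = 1) (hXcol : ∀ j, ∑ i, X i j = 1)
    (r s : Fin m) :
    (Xᵀ * X) r s = if sameCluster X r s then 1 else 0 := by
  rw [Matrix.mul_apply]
  simp only [Matrix.transpose_apply]
  by_cases h : sameCluster X r s
  · have hc : ∀ i, X i s = X i r := fun i => (congrFun h i).symm
    simp only [hc, if_pos h]
    have : ∀ i, X i r * X i r = X i r := by
      intro i; rcases hXbin i r with h | h <;> simp [h]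
    rw [Finset.sum_congr rfl (fun i _ => this i)]
    exact hXcol r
  · rw [if_neg h]
    apply Finset.sum_eq_zero
    intro i _
    by_contra hne
    rcases hXbin i r with h0 | h1
    · exact hne (by simp [h0])
    rcases hXbin i s with h0 | h1'
    · exact hne (by simp [h0])
    -- X i r = 1 = X i s; then both columns are the indicator of i
    apply h
    have hcol : ∀ (j : Fin m), X i j = 1 → ∀ k, k ≠ i → X k j = 0 := by
      intro j hj k hk
      by_contra hk0
      rcases hXbin k j with h0 | h1k
      · exact hk0 h0
      have hsub : ({i, k} : Finset (Fin ℓ)) ⊆ Finset.univ := Finset.subset_univ _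
      have hle : ∑ t ∈ ({i, k} : Finset (Fin ℓ)), X t j ≤ ∑ t, X t j := by
        apply Finset.sum_le_sum_of_subset_of_nonneg hsub
        intro t _ _
        rcases hXbin t j with h | h <;> simp [h]
      rw [Finset.sum_pair (Ne.symm hk), hj, h1k, hXcol j] at hle
      linarith
    funext k
    by_cases hk : k = i
    · rw [hk, h1, h1']
    · rw [hcol r h1 k hk, hcol s h1' k hk]

lemma chi_eq_card {m : ℕ} (A B : Matrix (Fin m) (Fin m) ℝ)
    (P Q : Fin m → Fin m → Prop) [∀ r s, Decidable (P r s)] [∀ r s, Decidable (Q r s)]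
    (hA : ∀ r s, A r s = if P r s then 1 else 0)
    (hB : ∀ r s, B r s = if Q r s then 1 else 0) :
    chi A B = #{p : Fin m × Fin m | p.1 < p.2 ∧ P p.1 p.2 ∧ Q p.1 p.2} := by
  unfold chi
  have hcard : (#{p : Fin m × Fin m | p.1 < p.2 ∧ P p.1 p.2 ∧ Q p.1 p.2} : ℝ)
      = ∑ r : Fin m, ∑ s : Fin m, if r < s ∧ P r s ∧ Q r s then (1:ℝ) else 0 := by
    rw [Finset.card_filter]
    push_cast
    rw [← Finset.sum_product']
    rfl
  rw [hcard]
  apply Finset.sum_congr rfl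
  intro r _
  have hIoi : Finset.Ioi r = Finset.univ.filter (fun s => r < s) := by
    ext s; simp
  rw [hIoi, Finset.sum_filter]
  apply Finset.sum_congr rfl
  intro s _
  rw [hA, hB]
  by_cases h : r < s <;> by_cases hp : P r s <;> by_cases hq : Q r s <;>
    simp [h, hp, hq]

/-- for hard partitions `X` and `Y`, the generalized confusion matrix
computed via `χ` from compatibility matrices coincides with the classical pair-counting
confusion matrix: `m₁₁` counts unordered pairs together in both, `m₁₀` pairs together
in `X` but separated in `Y`, `m₀₁` pairs separated in `X` but together in `Y`, and
`m₀₀` pairs separated in both. -/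
theorem confusion_matrix_extends_pair_counting {ℓ m : ℕ}
    (X Y : Matrix (Fin ℓ) (Fin m) ℝ)
    (hXbin : ∀ i j, X i j = 0 ∨ X i j = 1) (hXcol : ∀ j, ∑ i, X i j = 1)
    (hYbin : ∀ i j, Y i j = 0 ∨ Y i j = 1) (hYcol : ∀ j, ∑ i, Y i j = 1) :
    chi (Xᵀ * X) (Yᵀ * Y) =
      #{p : Fin m × Fin m | p.1 < p.2 ∧ sameCluster X p.1 p.2 ∧ sameCluster Y p.1 p.2} ∧
    chi (Xᵀ * X) (onesMat m - Yᵀ * Y) =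
      #{p : Fin m × Fin m | p.1 < p.2 ∧ sameCluster X p.1 p.2 ∧ ¬ sameCluster Y p.1 p.2} ∧
    chi (onesMat m - Xᵀ * X) (Yᵀ * Y) =
      #{p : Fin m × Fin m | p.1 < p.2 ∧ ¬ sameCluster X p.1 p.2 ∧ sameCluster Y p.1 p.2} ∧
    chi (onesMat m - Xᵀ * X) (onesMat m - Yᵀ * Y) =
      #{p : Fin m × Fin m | p.1 < p.2 ∧ ¬ sameCluster X p.1 p.2 ∧ ¬ sameCluster Y p.1 p.2} := by
  have hX := compat_entry X hXbin hXcol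
  have hY := compat_entry Y hYbin hYcol
  have hX' : ∀ r s, (onesMat m - Xᵀ * X) r s = if ¬ sameCluster X r s then 1 else 0 := by
    intro r s
    simp only [Matrix.sub_apply, onesMat, hX r s]
    by_cases h : sameCluster X r s <;> simp [h]
  have hY' : ∀ r s, (onesMat m - Yᵀ * Y) r s = if ¬ sameCluster Y r s then 1 else 0 := by
    intro r s
    simp only [Matrix.sub_apply, onesMat, hY r s]
    by_cases h : sameCluster Y r s <;> simp [h]
  refine ⟨?_, ?_, ?_, ?_⟩
  · exact chi_eq_card _ _ (fun r s => sameCluster X r s) (fun r s => sameCluster Y r s) hX hY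
  · exact chi_eq_card _ _ (fun r s => sameCluster X r s) (fun r s => ¬ sameCluster Y r s) hX hY'
  · exact chi_eq_card _ _ (fun r s => ¬ sameCluster X r s) (fun r s => sameCluster Y r s) hX' hY
  · exact chi_eq_card _ _ (fun r s => ¬ sameCluster X r s) (fun r s => ¬ sameCluster Y r s) hX' hY'
end

section
/- Let (P, δ) be a compact metric space, h continuous nonnegative loss, and X₁, X₂, … i.i.d. P-valued random variables with law Q. Let V_n = inf_Z (1/n) Σ_{i=1}^n h(δ(X_i, Z)) and V_Q = inf_Z ∫ h(δ(X, Z)) dQ(X). Then V_n → V_Q almost surely. -/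
open MeasureTheory Filter

/-- Deterministic lemma: if `F n → G` pointwise on a dense set, with a uniform
equicontinuity modulus and nonnegativity, then the infima converge. -/
private lemma det_lemma {P : Type*} [MetricSpace P] [CompactSpace P] [Nonempty P]
    {D : Set P} (hD : Dense D) (F : ℕ → P → ℝ) (G : P → ℝ)
    (hF0 : ∀ n Z, 0 ≤ F n Z) (hG0 : ∀ Z, 0 ≤ G Z)
    (hmod : ∀ ε : ℝ, 0 < ε → ∃ δ : ℝ, 0 < δ ∧
      (∀ n Z Z', dist Z Z' < δ → F n Z ≤ F n Z' + ε) ∧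
      (∀ Z Z', dist Z Z' < δ → G Z ≤ G Z' + ε))
    (hconv : ∀ z ∈ D, Tendsto (fun n => F n z) atTop (nhds (G z))) :
    Tendsto (fun n => ⨅ Z, F n Z) atTop (nhds (⨅ Z, G Z)) := by
  classical
  have hbF : ∀ n, BddBelow (Set.range (F n)) :=
    fun n => ⟨0, by rintro _ ⟨Z, rfl⟩; exact hF0 n Z⟩
  have hbG : BddBelow (Set.range G) := ⟨0, by rintro _ ⟨Z, rfl⟩; exact hG0 Z⟩
  rw [Metric.tendsto_atTop]
  intro ε hε
  obtain ⟨δ, hδ0, hmF, hmG⟩ := hmod (ε / 4) (by linarith)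
  -- finite net with centers in D
  obtain ⟨S, hScov⟩ := isCompact_univ.elim_finite_subcover
      (fun z : D => Metric.ball (z : P) δ) (fun z => Metric.isOpen_ball) (by
        intro x _
        obtain ⟨z, hzD, hz⟩ := hD.exists_dist_lt x hδ0
        exact Set.mem_iUnion.2 ⟨⟨z, hzD⟩, by simpa [Metric.mem_ball] using hz⟩)
  have hnet : ∀ Z : P, ∃ z ∈ S, dist Z (z : P) < δ := by
    intro Z
    have := hScov (Set.mem_univ Z)
    simp only [Set.mem_iUnion, Metric.mem_ball] at this
    obtain ⟨z, hzS, hz⟩ := this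
    exact ⟨z, hzS, hz⟩
  obtain ⟨z₀, hz₀S, -⟩ := hnet (Classical.arbitrary P)
  have hSne : S.Nonempty := ⟨z₀, hz₀S⟩
  -- net infima
  set m : ℕ → ℝ := fun n => S.inf' hSne (fun z => F n (z : P)) with hm
  set mG : ℝ := S.inf' hSne (fun z => G (z : P)) with hmG'
  have b1 : ∀ n, (⨅ Z, F n Z) ≤ m n :=
    fun n => Finset.le_inf' hSne _ (fun z _ => ciInf_le (hbF n) (z : P))
  have b2 : ∀ n, m n ≤ (⨅ Z, F n Z) + ε / 4 := by
    intro n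
    have key : ∀ Z, m n - ε / 4 ≤ F n Z := by
      intro Z
      obtain ⟨z, hzS, hz⟩ := hnet Z
      have h1 : m n ≤ F n (z : P) := Finset.inf'_le _ hzS
      have h2 : F n (z : P) ≤ F n Z + ε / 4 := hmF n _ Z (by rwa [dist_comm])
      linarith
    have := le_ciInf key
    linarith
  have b3 : (⨅ Z, G Z) ≤ mG :=
    Finset.le_inf' hSne _ (fun z _ => ciInf_le hbG (z : P))
  have b4 : mG ≤ (⨅ Z, G Z) + ε / 4 := by
    have key : ∀ Z, mG - ε / 4 ≤ G Z := by
      intro Z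
      obtain ⟨z, hzS, hz⟩ := hnet Z
      have h1 : mG ≤ G (z : P) := Finset.inf'_le _ hzS
      have h2 : G (z : P) ≤ G Z + ε / 4 := hmG _ Z (by rwa [dist_comm])
      linarith
    have := le_ciInf key
    linarith
  -- eventual closeness on the net
  have hev : ∀ᶠ n in atTop, ∀ z ∈ S, |F n (z : P) - G (z : P)| ≤ ε / 4 := by
    rw [eventually_all_finset]
    intro z hz
    obtain ⟨N, hN⟩ := Metric.tendsto_atTop.1 (hconv (z : P) z.2) (ε / 4) (by linarith)
    filter_upwards [eventually_ge_atTop N] with n hn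
    have := hN n hn
    rw [Real.dist_eq] at this
    linarith
  obtain ⟨N, hN⟩ := eventually_atTop.1 hev
  refine ⟨N, fun n hn => ?_⟩
  have hclose := hN n hn
  obtain ⟨zF, hzF, hzFe⟩ := Finset.exists_mem_eq_inf' hSne (fun z => F n (z : P))
  obtain ⟨zG, hzG, hzGe⟩ := Finset.exists_mem_eq_inf' hSne (fun z => G (z : P))
  have c1 : mG ≤ m n + ε / 4 := by
    have h1 : mG ≤ G (zF : P) := Finset.inf'_le _ hzF
    have h2 := abs_le.1 (hclose zF hzF)
    have hmn : m n = F n (zF : P) := hzFe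
    linarith [h2.1]
  have c2 : m n ≤ mG + ε / 4 := by
    have h1 : m n ≤ F n (zG : P) := Finset.inf'_le _ hzG
    have h2 := abs_le.1 (hclose zG hzG)
    have hmg : mG = G (zG : P) := hzGe
    linarith [h2.2]
  rw [Real.dist_eq, abs_lt]
  constructor <;> [linarith [b1 n, b2 n, b3, b4]; linarith [b1 n, b2 n, b3, b4]]

/-- let `(P, δ)` be a compact metric space, `h` a continuous nonnegative
loss, and `X₁, X₂, …` i.i.d. `P`-valued random variables with law `Q`. With
`V_n = inf_Z (1/n) Σ_{i<n} h(δ(X_i,Z))` and `V_Q = inf_Z ∫ h(δ(X,Z)) dQ(X)`, we have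
`V_n → V_Q` almost surely. -/
theorem empirical_variation_strongly_consistent
    (P : Type*) [MetricSpace P] [CompactSpace P] [Nonempty P]
    [MeasurableSpace P] [BorelSpace P]
    (h : ℝ → ℝ) (hh : Continuous h) (hh0 : ∀ x, 0 ≤ x → 0 ≤ h x)
    (Q : Measure P) [IsProbabilityMeasure Q]
    (Ω : Type*) [MeasurableSpace Ω] (μ : Measure Ω) [IsProbabilityMeasure μ]
    (X : ℕ → Ω → P) (hmeas : ∀ i, Measurable (X i))
    (hindep : ProbabilityTheory.iIndepFun X μ)
    (hlaw : ∀ i, μ.map (X i) = Q) :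
    ∀ᵐ ω ∂μ,
      Tendsto
        (fun n : ℕ => ⨅ Z : P, (1 / (n : ℝ)) * ∑ i ∈ Finset.range n, h (dist (X i ω) Z))
        atTop
        (nhds (⨅ Z : P, ∫ x, h (dist x Z) ∂Q)) := by
  classical
  have hgc : Continuous (fun p : P × P => h (dist p.1 p.2)) := hh.comp continuous_dist
  have hgm : ∀ Z : P, Measurable fun x => h (dist x Z) :=
    fun Z => (hh.comp (continuous_id.dist continuous_const)).measurable
  have hg0 : ∀ x Z : P, 0 ≤ h (dist x Z) := fun x Z => hh0 _ dist_nonneg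
  obtain ⟨p₀, -, hM⟩ := isCompact_univ.exists_isMaxOn Set.univ_nonempty hgc.continuousOn
  set M := h (dist p₀.1 p₀.2) with hMdef
  have hMb : ∀ x Z : P, h (dist x Z) ≤ M := fun x Z => hM (Set.mem_univ ((x, Z) : P × P))
  have hint : ∀ Z : P, Integrable (fun x => h (dist x Z)) Q := fun Z =>
    (integrable_const M).mono' (hgm Z).aestronglyMeasurable
      (Filter.Eventually.of_forall fun x => by
        rw [Real.norm_eq_abs, abs_of_nonneg (hg0 x Z)]; exact hMb x Z)
  -- SLLN at each fixed center Z
  have hslln : ∀ Z : P, ∀ᵐ ω ∂μ,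
      Tendsto (fun n : ℕ => (1 / (n : ℝ)) * ∑ i ∈ Finset.range n, h (dist (X i ω) Z)) atTop
        (nhds (∫ x, h (dist x Z) ∂Q)) := by
    intro Z
    have hXid : ∀ i, ProbabilityTheory.IdentDistrib (X i) (X 0) μ μ := fun i =>
      ⟨(hmeas i).aemeasurable, (hmeas 0).aemeasurable, by rw [hlaw i, hlaw 0]⟩
    have hident : ∀ i, ProbabilityTheory.IdentDistrib
        (fun ω => h (dist (X i ω) Z)) (fun ω => h (dist (X 0 ω) Z)) μ μ := fun i =>
      (hXid i).comp (hgm Z)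
    have hintω : Integrable (fun ω => h (dist (X 0 ω) Z)) μ :=
      (integrable_const M).mono' ((hgm Z).comp (hmeas 0)).aestronglyMeasurable
        (Filter.Eventually.of_forall fun ωx => by
          rw [Real.norm_eq_abs, abs_of_nonneg (hg0 _ Z)]; exact hMb _ Z)
    have hpind : Pairwise (Function.onFun (ProbabilityTheory.IndepFun · · μ)
        fun i ω => h (dist (X i ω) Z)) := fun i j hij =>
      (hindep.indepFun hij).comp (hgm Z) (hgm Z)
    have hsl := ProbabilityTheory.strong_law_ae_real _ hintω hpind hident
    have heq : (∫ ω, h (dist (X 0 ω) Z) ∂μ) = ∫ x, h (dist x Z) ∂Q := by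
      rw [← hlaw 0, integral_map (hmeas 0).aemeasurable (hgm Z).aestronglyMeasurable]
    filter_upwards [hsl] with ω hω
    rw [heq] at hω
    have : (fun n : ℕ => (1 / (n : ℝ)) * ∑ i ∈ Finset.range n, h (dist (X i ω) Z)) =
        fun n : ℕ => (∑ i ∈ Finset.range n, h (dist (X i ω) Z)) / n := by
      funext n; ring
    rw [this]
    exact hω
  obtain ⟨D, hDc, hDd⟩ := TopologicalSpace.exists_countable_dense P
  have hA : ∀ᵐ ω ∂μ, ∀ z ∈ D,
      Tendsto (fun n : ℕ => (1 / (n : ℝ)) * ∑ i ∈ Finset.range n, h (dist (X i ω) z)) atTop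
        (nhds (∫ x, h (dist x z) ∂Q)) :=
    (ae_ball_iff hDc).2 fun z _ => hslln z
  filter_upwards [hA] with ω hω
  refine det_lemma hDd
    (fun n Z => (1 / (n : ℝ)) * ∑ i ∈ Finset.range n, h (dist (X i ω) Z))
    (fun Z => ∫ x, h (dist x Z) ∂Q) ?_ ?_ ?_ hω
  · intro n Z
    exact mul_nonneg (by positivity) (Finset.sum_nonneg fun i _ => hg0 _ _)
  · intro Z
    exact integral_nonneg fun x => hg0 x Z
  · intro ε hε
    have hu := CompactSpace.uniformContinuous_of_continuous hgc
    rw [Metric.uniformContinuous_iff] at hu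
    obtain ⟨δ, hδ0, hδ⟩ := hu ε hε
    have key : ∀ x Z Z' : P, dist Z Z' < δ → h (dist x Z) ≤ h (dist x Z') + ε := by
      intro x Z Z' hd
      have hlt : dist ((x, Z) : P × P) (x, Z') < δ := by
        rw [Prod.dist_eq]; simp only [dist_self]; exact max_lt hδ0 hd
      have := hδ hlt
      rw [Real.dist_eq] at this
      have := abs_lt.1 this
      linarith [this.1, this.2]
    refine ⟨δ, hδ0, ?_, ?_⟩
    · intro n Z Z' hd
      have hsum : ∑ i ∈ Finset.range n, h (dist (X i ω) Z) ≤
          (∑ i ∈ Finset.range n, h (dist (X i ω) Z')) + n * ε := by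
        calc ∑ i ∈ Finset.range n, h (dist (X i ω) Z)
            ≤ ∑ i ∈ Finset.range n, (h (dist (X i ω) Z') + ε) :=
              Finset.sum_le_sum fun i _ => key _ Z Z' hd
          _ = (∑ i ∈ Finset.range n, h (dist (X i ω) Z')) + n * ε := by
              rw [Finset.sum_add_distrib, Finset.sum_const, Finset.card_range,
                nsmul_eq_mul]
      rcases Nat.eq_zero_or_pos n with rfl | hn
      · simp; linarith
      · have hn' : (0 : ℝ) < n := by exact_mod_cast hn
        calc (1 / (n : ℝ)) * ∑ i ∈ Finset.range n, h (dist (X i ω) Z)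
            ≤ (1 / (n : ℝ)) * ((∑ i ∈ Finset.range n, h (dist (X i ω) Z')) + n * ε) :=
              mul_le_mul_of_nonneg_left hsum (le_of_lt (one_div_pos.2 hn'))
          _ = (1 / (n : ℝ)) * (∑ i ∈ Finset.range n, h (dist (X i ω) Z')) + ε := by
              rw [mul_add, ← mul_assoc, one_div_mul_cancel hn'.ne', one_mul]
    · intro Z Z' hd
      calc (∫ x, h (dist x Z) ∂Q) ≤ ∫ x, (h (dist x Z') + ε) ∂Q :=
            integral_mono (hint Z) ((hint Z').add (integrable_const ε))
              (fun x => key x Z Z' hd)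
        _ = (∫ x, h (dist x Z') ∂Q) + ε := by
            rw [integral_add (hint Z') (integrable_const ε), integral_const]
            simp
end

section
/- Let (P, δ) be a compact metric space, h a continuous nonnegative loss, Q a Borel probability measure on P, X₁, X₂, … i.i.d. with law Q. If the expected Fréchet function F_Q(Z) = ∫ h(δ(X,Z)) dQ(X) has a unique minimizer M, then any sequence M_n of minimizers of the empirical Fréchet functions F_n(Z) = (1/n)Σ h(δ(X_i, Z)) satisfies δ(M_n, M) → 0 almost surely. -/
open MeasureTheory Filter

/-- let `(P, δ)` be a compact metric space, `h` a continuous nonnegative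
loss, `Q` a Borel probability measure, and `X₁, X₂, …` i.i.d. with law `Q`. If the
expected Fréchet function `F_Q(Z) = ∫ h(δ(X,Z)) dQ(X)` has a unique minimizer `M`,
then any sequence `M_n` of minimizers of the empirical Fréchet functions
`F_n(Z) = (1/n) Σ_{i<n} h(δ(X_i,Z))` satisfies `δ(M_n, M) → 0` almost surely. -/
theorem frechet_mean_strongly_consistent_unique_case
    (P : Type*) [MetricSpace P] [CompactSpace P] [Nonempty P]
    [MeasurableSpace P] [BorelSpace P]
    (h : ℝ → ℝ) (hh : Continuous h) (hh0 : ∀ x, 0 ≤ x → 0 ≤ h x)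
    (Q : Measure P) [IsProbabilityMeasure Q]
    (Ω : Type*) [MeasurableSpace Ω] (μ : Measure Ω) [IsProbabilityMeasure μ]
    (X : ℕ → Ω → P) (hmeas : ∀ i, Measurable (X i))
    (hindep : ProbabilityTheory.iIndepFun X μ)
    (hlaw : ∀ i, μ.map (X i) = Q)
    (M : P)
    (hM : ∀ Z : P, (∫ x, h (dist x M) ∂Q) ≤ ∫ x, h (dist x Z) ∂Q)
    (hMuniq : ∀ M' : P, (∀ Z : P, (∫ x, h (dist x M') ∂Q) ≤ ∫ x, h (dist x Z) ∂Q) → M' = M)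
    (Mn : ℕ → Ω → P)
    (hMn : ∀ n ω, ∀ Z : P,
      (∑ i ∈ Finset.range n, h (dist (X i ω) (Mn n ω))) / n
        ≤ (∑ i ∈ Finset.range n, h (dist (X i ω) Z)) / n) :
    ∀ᵐ ω ∂μ, Tendsto (fun n : ℕ => dist (Mn n ω) M) atTop (nhds 0) := by
  classical
  set F : P → ℝ := fun Z => ∫ x, h (dist x Z) ∂Q with hF
  set Fn : ℕ → Ω → P → ℝ :=
    fun n ω Z => (∑ i ∈ Finset.range n, h (dist (X i ω) Z)) / n with hFn
  -- continuity of the integrand in each variable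
  have hcont : ∀ z : P, Continuous fun x : P => h (dist x z) :=
    fun z => hh.comp (continuous_id.dist continuous_const)
  have hcont' : ∀ x : P, Continuous fun z : P => h (dist x z) :=
    fun x => hh.comp (continuous_const.dist continuous_id)
  have hmeasf : ∀ z : P, Measurable fun x : P => h (dist x z) :=
    fun z => (hcont z).measurable
  -- integrability
  have hint : ∀ z : P, Integrable (fun x : P => h (dist x z)) Q := by
    intro z
    exact (hcont z).integrable_of_hasCompactSupport (isClosed_tsupport _).isCompact
  -- uniform modulus of continuity
  have modulus : ∀ ε : ℝ, 0 < ε → ∃ δ : ℝ, 0 < δ ∧ ∀ Z z : P, dist Z z < δ →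
      ∀ x : P, |h (dist x Z) - h (dist x z)| ≤ ε := by
    intro ε hε
    have hG : Continuous fun p : P × P => h (dist p.1 p.2) :=
      hh.comp (continuous_fst.dist continuous_snd)
    have hUC := CompactSpace.uniformContinuous_of_continuous hG
    obtain ⟨δ, hδ, hδ'⟩ := Metric.uniformContinuous_iff.mp hUC ε hε
    refine ⟨δ, hδ, fun Z z hZz x => ?_⟩
    have hd : dist ((x, Z) : P × P) (x, z) < δ := by
      rw [Prod.dist_eq]
      simp only [dist_self]
      rwa [max_eq_right dist_nonneg]
    have := hδ' hd
    rw [Real.dist_eq] at this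
    exact this.le
  -- the difference bound on F
  have Fdiff : ∀ ε : ℝ, 0 < ε → ∀ Z z : P,
      (∀ x : P, |h (dist x Z) - h (dist x z)| ≤ ε) → |F Z - F z| ≤ ε := by
    intro ε hε Z z hb
    have : F Z - F z = ∫ x, (h (dist x Z) - h (dist x z)) ∂Q :=
      (integral_sub (hint Z) (hint z)).symm
    rw [this]
    calc |∫ x, (h (dist x Z) - h (dist x z)) ∂Q|
        ≤ ∫ x, |h (dist x Z) - h (dist x z)| ∂Q := by
          simpa [Real.norm_eq_abs] using
            norm_integral_le_integral_norm (fun x => h (dist x Z) - h (dist x z)) (μ := Q)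
      _ ≤ ∫ _x, ε ∂Q := by
          refine integral_mono ((hint Z).sub (hint z)).abs (integrable_const ε) ?_
          intro x; exact hb x
      _ = ε := by simp
  -- continuity of F
  have Fcont : Continuous F := by
    rw [Metric.continuous_iff]
    intro b ε hε
    obtain ⟨δ, hδ, hδ'⟩ := modulus (ε / 2) (by positivity)
    refine ⟨δ, hδ, fun a ha => ?_⟩
    have := Fdiff (ε / 2) (by positivity) a b (hδ' a b ha)
    rw [Real.dist_eq]
    linarith
  -- SLLN at a fixed point
  have slln : ∀ z : P, ∀ᵐ ω ∂μ,
      Tendsto (fun n : ℕ => Fn n ω z) atTop (nhds (F z)) := by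
    intro z
    set Y : ℕ → Ω → ℝ := fun i ω => h (dist (X i ω) z) with hY
    obtain ⟨C, hC⟩ : ∃ C : ℝ, ∀ x : P, ‖h (dist x z)‖ ≤ C := by
      obtain ⟨x0, -, hx0⟩ := isCompact_univ.exists_isMaxOn Set.univ_nonempty
        ((hcont z).norm.continuousOn (s := Set.univ))
      exact ⟨‖h (dist x0 z)‖, fun x => hx0 (Set.mem_univ x)⟩
    have hYint : Integrable (Y 0) μ := by
      refine Integrable.mono' (integrable_const C)
        (((hmeasf z).comp (hmeas 0)).aestronglyMeasurable) ?_
      exact Filter.Eventually.of_forall fun ω => hC (X 0 ω)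
    have hYindep : Pairwise (Function.onFun (ProbabilityTheory.IndepFun · · μ) Y) := by
      intro i j hij
      exact (hindep.indepFun hij).comp (hmeasf z) (hmeasf z)
    have hYident : ∀ i, ProbabilityTheory.IdentDistrib (Y i) (Y 0) μ μ := by
      intro i
      have hXid : ProbabilityTheory.IdentDistrib (X i) (X 0) μ μ :=
        ⟨(hmeas i).aemeasurable, (hmeas 0).aemeasurable, by rw [hlaw i, hlaw 0]⟩
      exact hXid.comp (hmeasf z)
    have hlim := ProbabilityTheory.strong_law_ae_real Y hYint hYindep hYident
    have hmean : F z = ∫ ω, Y 0 ω ∂μ := by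
      show (∫ x, h (dist x z) ∂Q) = _
      rw [← hlaw 0, integral_map (hmeas 0).aemeasurable
        (hcont z).aestronglyMeasurable]
    rw [← hmean] at hlim
    exact hlim
  -- finite nets
  have hnet : ∀ k : ℕ, ∃ t : Set P, t.Finite ∧
      (Set.univ : Set P) ⊆ ⋃ x ∈ t, Metric.ball x (1 / (k + 1)) := by
    intro k
    obtain ⟨t, -, htf, htc⟩ := finite_cover_balls_of_compact
      (isCompact_univ : IsCompact (Set.univ : Set P))
      (e := 1 / (k + 1)) (by positivity)
    exact ⟨t, htf, htc⟩
  choose T hTfin hTcov using hnet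
  -- the good event
  have good : ∀ᵐ ω ∂μ, ∀ k : ℕ, ∀ z ∈ T k,
      Tendsto (fun n : ℕ => Fn n ω z) atTop (nhds (F z)) := by
    rw [ae_all_iff]
    intro k
    rw [ae_ball_iff (hTfin k).countable]
    exact fun z _ => slln z
  filter_upwards [good] with ω hω
  -- uniform convergence for this ω
  have unif : ∀ ε : ℝ, 0 < ε → ∀ᶠ n in atTop, ∀ Z : P, |Fn n ω Z - F Z| ≤ ε := by
    intro ε hε
    obtain ⟨δ, hδ, hδ'⟩ := modulus (ε / 3) (by positivity)
    obtain ⟨k, hk⟩ := exists_nat_one_div_lt hδ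
    have hev : ∀ᶠ n in atTop, ∀ z ∈ T k, |Fn n ω z - F z| ≤ ε / 3 := by
      rw [eventually_all_finite (hTfin k)]
      intro z hz
      have := (hω k z hz).eventually (Metric.closedBall_mem_nhds (F z) (by positivity : (0:ℝ) < ε / 3))
      filter_upwards [this] with n hn
      simpa [Metric.mem_closedBall, Real.dist_eq] using hn
    filter_upwards [hev, eventually_ge_atTop 1] with n hn hn1 Z
    obtain ⟨z, hzT, hzZ⟩ : ∃ z ∈ T k, Z ∈ Metric.ball z (1 / (k + 1)) := by
      simpa using hTcov k (Set.mem_univ Z)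
    have hdZz : dist Z z < δ := lt_trans (by simpa [Metric.mem_ball] using hzZ) hk
    have hmod := hδ' Z z hdZz
    -- empirical difference
    have hemp : |Fn n ω Z - Fn n ω z| ≤ ε / 3 := by
      have hsub : Fn n ω Z - Fn n ω z
          = (∑ i ∈ Finset.range n, (h (dist (X i ω) Z) - h (dist (X i ω) z))) / n := by
        rw [hFn]; rw [Finset.sum_sub_distrib, sub_div]
      rw [hsub, abs_div]
      have h1 : |(∑ i ∈ Finset.range n, (h (dist (X i ω) Z) - h (dist (X i ω) z)))|
          ≤ n * (ε / 3) := by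
        refine le_trans (Finset.abs_sum_le_sum_abs _ _) ?_
        calc ∑ i ∈ Finset.range n, |h (dist (X i ω) Z) - h (dist (X i ω) z)|
            ≤ ∑ _i ∈ Finset.range n, (ε / 3) :=
              Finset.sum_le_sum fun i _ => hmod (X i ω)
          _ = n * (ε / 3) := by simp [mul_comm]
      have hnpos : (0:ℝ) < n := by exact_mod_cast hn1
      rw [abs_of_pos hnpos]
      calc |(∑ i ∈ Finset.range n, (h (dist (X i ω) Z) - h (dist (X i ω) z)))| / (n:ℝ)
          ≤ (n * (ε / 3)) / n := by gcongr
        _ = ε / 3 := by field_simp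
    have hFdiff : |F z - F Z| ≤ ε / 3 := by
      have := Fdiff (ε / 3) (by positivity) z Z (fun x => by
        have := hmod x; rwa [abs_sub_comm] at this)
      exact this
    have hnz := hn z hzT
    calc |Fn n ω Z - F Z|
        = |(Fn n ω Z - Fn n ω z) + (Fn n ω z - F z) + (F z - F Z)| := by ring_nf
      _ ≤ |Fn n ω Z - Fn n ω z| + |Fn n ω z - F z| + |F z - F Z| := by
          exact (abs_add_le _ _).trans (add_le_add_left (abs_add_le _ _) _)
      _ ≤ ε / 3 + ε / 3 + ε / 3 := by gcongr
      _ = ε := by ring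
  -- now prove convergence of the minimizers
  have htend : Tendsto (fun n : ℕ => Mn n ω) atTop (nhds M) := by
    apply tendsto_of_subseq_tendsto
    intro ns hns
    obtain ⟨M', -, φ, hφ, hφt⟩ := isCompact_univ.tendsto_subseq
      (x := fun k => Mn (ns k) ω) (fun n => Set.mem_univ _)
    have hM' : M' = M := by
      apply hMuniq
      intro Z
      change F M' ≤ F Z
      by_contra hcon
      push_neg at hcon
      set ε := (F M' - F Z) / 3 with hεdef
      have hεpos : 0 < ε := by simp [hεdef]; linarith
      have hev : ∀ᶠ n in atTop, F (Mn n ω) ≤ F Z + 2 * ε := by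
        filter_upwards [unif ε hεpos] with n hn
        have h1 : F (Mn n ω) - Fn n ω (Mn n ω) ≤ ε := by
          have := hn (Mn n ω); rw [abs_sub_comm] at this
          exact (abs_le.mp this).2
        have h2 : Fn n ω (Mn n ω) ≤ Fn n ω Z := hMn n ω Z
        have h3 : Fn n ω Z - F Z ≤ ε := (abs_le.mp (hn Z)).2
        linarith
      have hcomp : Tendsto (fun k => ns (φ k)) atTop atTop :=
        hns.comp hφ.tendsto_atTop
      have hev2 : ∀ᶠ k in atTop, F (Mn (ns (φ k)) ω) ≤ F Z + 2 * ε :=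
        hcomp.eventually hev
      have hlimF : Tendsto (fun k => F (Mn (ns (φ k)) ω)) atTop (nhds (F M')) :=
        (Fcont.tendsto M').comp hφt
      have := le_of_tendsto hlimF hev2
      rw [hεdef] at this
      linarith
    exact ⟨φ, by rw [← hM']; exact hφt⟩
  exact tendsto_iff_dist_tendsto_zero.mp htend
end

section
/- The map f sending a partition matrix X ∈ [0,1]^{ℓ×m} (with columns summing to 1) to the ℓ×ℓ attributed-graph matrix G_X whose diagonal entries are the rows of X (G_X(k,k) = x_{k:} ∈ ℝ^m) and off-diagonal entries are zero vectors, satisfies min_{P ∈ Π} ‖X − PY‖₂ = min_{P ∈ Π} ‖G_X − P G_Y Pᵀ‖₂ for all X, Y, i.e., f induces an isometric embedding of (P_{ℓ,m}, δ₂) into the graph edit kernel space. -/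
open Finset

/-- Frobenius norm of an `ℓ×ℓ` matrix with attributes in `ℝ^m`. -/
noncomputable def frobNormG {ℓ m : ℕ} (A : Matrix (Fin ℓ) (Fin ℓ) (Fin m → ℝ)) : ℝ :=
  Real.sqrt (∑ i, ∑ j, ∑ k, (A i j k) ^ 2)

/-- Conjugation `P G Pᵀ` of an attributed-graph matrix by the permutation matrix of `σ`. -/
def conjAct {ℓ m : ℕ} (σ : Equiv.Perm (Fin ℓ)) (G : Matrix (Fin ℓ) (Fin ℓ) (Fin m → ℝ)) :
    Matrix (Fin ℓ) (Fin ℓ) (Fin m → ℝ) := fun i j => G (σ i) (σ j)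

/-- The attributed-graph matrix `G_X` of a partition matrix `X`: diagonal entries are
the rows of `X`, off-diagonal entries are zero vectors. -/
def graphOf {ℓ m : ℕ} (X : Matrix (Fin ℓ) (Fin m) ℝ) :
    Matrix (Fin ℓ) (Fin ℓ) (Fin m → ℝ) :=
  fun i j => if i = j then (fun k => X i k) else 0

/-- the map `X ↦ G_X` satisfies
`min_{P∈Π} ‖X − PY‖₂ = min_{P∈Π} ‖G_X − P G_Y Pᵀ‖₂` for all partition matrices `X, Y`,
i.e., it induces an isometric embedding of `(P_{ℓ,m}, δ₂)` into the graph edit kernel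
space `(G_{ℓ,m}, δ_g)`. -/
theorem partition_graph_isometric_embedding {ℓ m : ℕ}
    (X Y : Matrix (Fin ℓ) (Fin m) ℝ)
    (hX01 : ∀ i j, X i j ∈ Set.Icc (0 : ℝ) 1) (hXcol : ∀ j, ∑ i, X i j = 1)
    (hY01 : ∀ i j, Y i j ∈ Set.Icc (0 : ℝ) 1) (hYcol : ∀ j, ∑ i, Y i j = 1) :
    Finset.univ.inf' Finset.univ_nonempty
        (fun σ : Equiv.Perm (Fin ℓ) => frobNorm (X - permAct σ Y))
      = Finset.univ.inf' Finset.univ_nonempty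
        (fun σ : Equiv.Perm (Fin ℓ) => frobNormG (graphOf X - conjAct σ (graphOf Y))) := by
  apply Finset.inf'_congr _ rfl
  intro σ _
  unfold frobNorm frobNormG
  congr 1
  have key : ∀ i j : Fin ℓ, ∑ k, ((graphOf X - conjAct σ (graphOf Y)) i j k) ^ 2
      = if i = j then ∑ k, ((X - permAct σ Y) i k) ^ 2 else 0 := by
    intro i j
    simp only [graphOf, conjAct, Matrix.sub_apply, permAct]
    by_cases h : i = j
    · subst h
      simp [Pi.sub_apply]
    · have h2 : ¬ σ i = σ j := fun hc => h (σ.injective hc)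
      simp [h, h2]
  calc ∑ i, ∑ k, ((X - permAct σ Y) i k) ^ 2
      = ∑ i, ∑ j, (if i = j then ∑ k, ((X - permAct σ Y) i k) ^ 2 else 0) := by
        simp
    _ = ∑ i, ∑ j, ∑ k, ((graphOf X - conjAct σ (graphOf Y)) i j k) ^ 2 := by
        simp_rw [key]
end
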